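/- Let p be prime, let d₁,...,d_m be positive integers with p ≥ Σ d_i, and let s ≥ 1. Suppose k_i = Σ_{t=0}^{s−1} k_i[t] p^t with digits 0 ≤ k_i[t] ≤ p−1, not all digits equal to p−1 simultaneously across all i and t ≥ 1, and write Σ_i d_i k_i[t] = u[t]p − v[t] with 0 ≤ v[t] ≤ p−1 and u[t] ≥ 0. If Σ_i d_i k_i ≡ 0 mod (p^s − 1), then u[t−1] = v[t] for every 0 ≤ t ≤ s−1, where u[−1] means u[s−1]. -/

import Mathlib

lemma geomsum (p : ℕ) (hp : 1 ≤ p) (s : ℕ) :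
    ∑ t ∈ Finset.range s, (p - 1) * p ^ t = p ^ s - 1 := by
  induction s with
  | zero => simp
  | succ n ih =>
    rw [Finset.sum_range_succ, ih, pow_succ]
    have h1 : 1 ≤ p ^ n := Nat.one_le_pow _ _ hp
    have h2 : (p - 1) * p ^ n = p ^ n * p - p ^ n := by
      rw [Nat.sub_mul, one_mul, mul_comm]
    have h3 : p ^ n ≤ p ^ n * p := Nat.le_mul_of_pos_right _ hp
    omega

lemma dig_uniq (p : ℕ) (hp : 2 ≤ p) : ∀ s (a b : ℕ → ℕ),
    (∀ t < s, a t < p) → (∀ t < s, b t < p) →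
    (∑ t ∈ Finset.range s, a t * p ^ t = ∑ t ∈ Finset.range s, b t * p ^ t) →
    ∀ t < s, a t = b t := by
  intro s
  induction s with
  | zero => intro a b _ _ _ t ht; omega
  | succ n ih =>
    intro a b ha hb h t ht
    rw [Finset.sum_range_succ', Finset.sum_range_succ'] at h
    have hrw : ∀ c : ℕ → ℕ, ∑ i ∈ Finset.range n, c (i + 1) * p ^ (i + 1)
        = (∑ i ∈ Finset.range n, c (i + 1) * p ^ i) * p := by
      intro c; rw [Finset.sum_mul]; apply Finset.sum_congr rfl
      intro i _; rw [pow_succ, mul_assoc]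
    rw [hrw a, hrw b] at h
    simp only [pow_zero, mul_one] at h
    have ha0 : a 0 < p := ha 0 (by omega)
    have hb0 : b 0 < p := hb 0 (by omega)
    have h0 : a 0 = b 0 := by
      have h' := congrArg (· % p) h
      rw [Nat.mul_add_mod', Nat.mul_add_mod', Nat.mod_eq_of_lt ha0,
        Nat.mod_eq_of_lt hb0] at h'
      exact h'
    have hA' : (∑ i ∈ Finset.range n, a (i + 1) * p ^ i) * p
        = (∑ i ∈ Finset.range n, b (i + 1) * p ^ i) * p := by omega
    have hA : ∑ i ∈ Finset.range n, a (i + 1) * p ^ i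
        = ∑ i ∈ Finset.range n, b (i + 1) * p ^ i :=
      Nat.eq_of_mul_eq_mul_right (by omega) hA'
    rcases Nat.eq_zero_or_pos t with h' | h'
    · subst h'; exact h0
    · obtain ⟨t', rfl⟩ := Nat.exists_eq_succ_of_ne_zero (by omega : t ≠ 0)
      exact ih (fun i => a (i + 1)) (fun i => b (i + 1))
        (fun i hi => ha (i + 1) (by omega)) (fun i hi => hb (i + 1) (by omega))
        hA t' (by omega)

set_option maxHeartbeats 1000000 in
/-- Proposition 3.4: if `p ≥ Σ dᵢ`, the `k_i[t]` are base-`p` digits (not all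
equal to `p−1` across all `i` and `t ≥ 1`), `Σᵢ dᵢ k_i[t] = u[t]p − v[t]` with
`0 ≤ v[t] ≤ p−1`, and `(p^s − 1) ∣ Σᵢ dᵢ kᵢ`, then `u[t−1] = v[t]` cyclically. -/
theorem stmt11 (p : ℕ) (hp : p.Prime) (m : ℕ) (d : Fin m → ℕ)
    (hdpos : ∀ i, 0 < d i) (hpd : ∑ i, d i ≤ p)
    (s : ℕ) (hs : 1 ≤ s) (k : Fin m → ℕ → ℕ)
    (hdig : ∀ i, ∀ t < s, k i t ≤ p - 1)
    (hnot : ¬ ∀ i, ∀ t, 1 ≤ t → t < s → k i t = p - 1)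
    (u v : ℕ → ℕ) (hv : ∀ t < s, v t ≤ p - 1)
    (heq : ∀ t < s, (∑ i, d i * k i t) + v t = u t * p)
    (hdvd : ((p : ℤ) ^ s - 1) ∣
      ∑ i, (d i : ℤ) * ∑ t ∈ Finset.range s, (k i t : ℤ) * (p : ℤ) ^ t) :
    (∀ t, 1 ≤ t → t < s → u (t - 1) = v t) ∧ u (s - 1) = v 0 := by
  have hp2 : 2 ≤ p := hp.two_le
  have hkey : p * (p - 1) + p = p * p := by
    have h1 : p - 1 + 1 = p := by omega
    have h2 : p * (p - 1 + 1) = p * (p - 1) + p := by ring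
    rw [h1] at h2; omega
  -- bound on u
  have hub : ∀ t < s, u t ≤ p - 1 := by
    intro t ht
    have hS : ∑ i, d i * k i t ≤ p * (p - 1) := by
      calc ∑ i, d i * k i t ≤ ∑ i, d i * (p - 1) :=
            Finset.sum_le_sum (fun i _ => Nat.mul_le_mul_left _ (hdig i t ht))
        _ = (∑ i, d i) * (p - 1) := by rw [Finset.sum_mul]
        _ ≤ p * (p - 1) := Nat.mul_le_mul_right _ hpd
    have h1 := heq t ht
    have h2 := hv t ht
    by_contra hc
    have : p * p ≤ u t * p := Nat.mul_le_mul_right _ (by omega)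
    omega
  -- the cyclically shifted u
  set w : ℕ → ℕ := fun t => if t = 0 then u (s - 1) else u (t - 1) with hw
  have hw0 : w 0 = u (s - 1) := by simp [hw]
  have hwsucc : ∀ t, w (t + 1) = u t := by intro t; simp [hw]
  have hws : w s = u (s - 1) := by
    rcases Nat.exists_eq_succ_of_ne_zero (by omega : s ≠ 0) with ⟨n, rfl⟩
    rw [hwsucc, Nat.succ_sub_one]
  have hwb : ∀ t < s, w t ≤ p - 1 := by
    intro t ht
    rcases Nat.eq_zero_or_pos t with h' | h'
    · rw [h', hw0]; exact hub (s - 1) (by omega)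
    · obtain ⟨t', rfl⟩ := Nat.exists_eq_succ_of_ne_zero (by omega : t ≠ 0)
      rw [hwsucc]; exact hub t' (by omega)
  -- rewrite the divisibility
  have step1 : ∑ i, (d i : ℤ) * ∑ t ∈ Finset.range s, (k i t : ℤ) * (p : ℤ) ^ t
      = ∑ t ∈ Finset.range s, (∑ i, (d i : ℤ) * (k i t : ℤ)) * (p : ℤ) ^ t := by
    calc ∑ i, (d i : ℤ) * ∑ t ∈ Finset.range s, (k i t : ℤ) * (p : ℤ) ^ t
        = ∑ i, ∑ t ∈ Finset.range s, (d i : ℤ) * (k i t : ℤ) * (p : ℤ) ^ t := by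
          apply Finset.sum_congr rfl; intro i _
          rw [Finset.mul_sum]; apply Finset.sum_congr rfl; intros; ring
      _ = ∑ t ∈ Finset.range s, ∑ i, (d i : ℤ) * (k i t : ℤ) * (p : ℤ) ^ t :=
          Finset.sum_comm
      _ = ∑ t ∈ Finset.range s, (∑ i, (d i : ℤ) * (k i t : ℤ)) * (p : ℤ) ^ t := by
          apply Finset.sum_congr rfl; intro t _; rw [Finset.sum_mul]
  have step2 : ∑ t ∈ Finset.range s, (∑ i, (d i : ℤ) * (k i t : ℤ)) * (p : ℤ) ^ t
      = ∑ t ∈ Finset.range s, (u t : ℤ) * (p : ℤ) ^ (t + 1)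
        - ∑ t ∈ Finset.range s, (v t : ℤ) * (p : ℤ) ^ t := by
    rw [← Finset.sum_sub_distrib]
    apply Finset.sum_congr rfl
    intro t ht
    rw [Finset.mem_range] at ht
    have h1 := heq t ht
    have h2 : (∑ i, (d i : ℤ) * (k i t : ℤ)) + (v t : ℤ) = (u t : ℤ) * p := by
      exact_mod_cast h1
    have h3 : (p : ℤ) ^ (t + 1) = (p : ℤ) ^ t * p := pow_succ _ _
    rw [h3]; linear_combination (p : ℤ) ^ t * h2
  have step3 : ∑ t ∈ Finset.range s, (u t : ℤ) * (p : ℤ) ^ (t + 1)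
      = ∑ t ∈ Finset.range s, (w t : ℤ) * (p : ℤ) ^ t
        + (u (s - 1) : ℤ) * ((p : ℤ) ^ s - 1) := by
    have h1 : ∀ t ∈ Finset.range s, (u t : ℤ) * (p : ℤ) ^ (t + 1)
        = (w (t + 1) : ℤ) * (p : ℤ) ^ (t + 1) := by
      intro t _; rw [hwsucc]
    rw [Finset.sum_congr rfl h1]
    have h2 := Finset.sum_range_succ' (fun t => (w t : ℤ) * (p : ℤ) ^ t) s
    rw [Finset.sum_range_succ] at h2
    rw [hws] at h2
    simp only [pow_zero, mul_one] at h2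
    linarith [h2]
  -- the key divisibility
  have hdvd2 : ((p : ℤ) ^ s - 1) ∣
      (∑ t ∈ Finset.range s, (w t : ℤ) * (p : ℤ) ^ t
        - ∑ t ∈ Finset.range s, (v t : ℤ) * (p : ℤ) ^ t) := by
    have h1 : ∑ t ∈ Finset.range s, (w t : ℤ) * (p : ℤ) ^ t
        - ∑ t ∈ Finset.range s, (v t : ℤ) * (p : ℤ) ^ t
        = (∑ i, (d i : ℤ) * ∑ t ∈ Finset.range s, (k i t : ℤ) * (p : ℤ) ^ t)
          - (u (s - 1) : ℤ) * ((p : ℤ) ^ s - 1) := by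
      rw [step1, step2, step3]; ring
    rw [h1]
    exact dvd_sub hdvd (Dvd.intro _ (mul_comm _ _))
  -- natural-number sums and their bounds
  set X : ℕ := ∑ t ∈ Finset.range s, w t * p ^ t with hX
  set Y : ℕ := ∑ t ∈ Finset.range s, v t * p ^ t with hY
  have hps1 : 1 ≤ p ^ s := Nat.one_le_pow _ _ (by omega)
  have hps2 : 2 ≤ p ^ s := le_trans hp2 (Nat.le_self_pow (by omega) p)
  have hXc : (X : ℤ) = ∑ t ∈ Finset.range s, (w t : ℤ) * (p : ℤ) ^ t := by
    rw [hX]; push_cast; rfl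
  have hYc : (Y : ℤ) = ∑ t ∈ Finset.range s, (v t : ℤ) * (p : ℤ) ^ t := by
    rw [hY]; push_cast; rfl
  have hXb : X ≤ p ^ s - 1 := by
    calc X ≤ ∑ t ∈ Finset.range s, (p - 1) * p ^ t :=
          Finset.sum_le_sum (fun t ht =>
            Nat.mul_le_mul_right _ (hwb t (Finset.mem_range.mp ht)))
      _ = p ^ s - 1 := geomsum p (by omega) s
  have hYb : Y ≤ p ^ s - 1 := by
    calc Y ≤ ∑ t ∈ Finset.range s, (p - 1) * p ^ t :=
          Finset.sum_le_sum (fun t ht =>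
            Nat.mul_le_mul_right _ (hv t (Finset.mem_range.mp ht)))
      _ = p ^ s - 1 := geomsum p (by omega) s
  have hNc : ((p ^ s - 1 : ℕ) : ℤ) = (p : ℤ) ^ s - 1 := by
    push_cast [Nat.cast_sub hps1]; ring
  have hdvd3 : ((p ^ s - 1 : ℕ) : ℤ) ∣ ((X : ℤ) - (Y : ℤ)) := by
    rw [hNc, hXc, hYc]; exact hdvd2
  -- trichotomy
  obtain ⟨c, hc⟩ := hdvd3
  have hN1 : (1 : ℤ) ≤ ((p ^ s - 1 : ℕ) : ℤ) := by exact_mod_cast (by omega : 1 ≤ p ^ s - 1)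
  have hXzb : (X : ℤ) ≤ ((p ^ s - 1 : ℕ) : ℤ) := by exact_mod_cast hXb
  have hYzb : (Y : ℤ) ≤ ((p ^ s - 1 : ℕ) : ℤ) := by exact_mod_cast hYb
  have hX0 : (0 : ℤ) ≤ (X : ℤ) := Int.natCast_nonneg _
  have hY0 : (0 : ℤ) ≤ (Y : ℤ) := Int.natCast_nonneg _
  have hcb : c = 0 ∨ c = 1 ∨ c = -1 := by
    by_contra hcon
    push_neg at hcon
    obtain ⟨hc0, hc1, hcm1⟩ := hcon
    rcases lt_trichotomy c 0 with h' | h' | h'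
    · have : c ≤ -2 := by omega
      nlinarith [hc, hN1, hXzb, hYzb, hX0, hY0]
    · omega
    · have : 2 ≤ c := by omega
      nlinarith [hc, hN1, hXzb, hYzb, hX0, hY0]
  rcases hcb with hc' | hc' | hc'
  · -- X = Y : the main case
    rw [hc', mul_zero] at hc
    have hXY : X = Y := by
      have : (X : ℤ) = (Y : ℤ) := by omega
      exact_mod_cast this
    have hwv : ∀ t < s, w t = v t :=
      dig_uniq p hp2 s w v (fun t ht => by have := hwb t ht; omega)
        (fun t ht => by have := hv t ht; omega) hXY
    constructor
    · intro t ht1 ht2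
      have h1 := hwv t ht2
      obtain ⟨t', rfl⟩ := Nat.exists_eq_succ_of_ne_zero (by omega : t ≠ 0)
      rw [hwsucc] at h1
      rw [Nat.succ_sub_one]
      exact h1
    · have h1 := hwv 0 (by omega)
      rw [hw0] at h1
      exact h1
  · -- X = p^s - 1, Y = 0 : contradiction with hnot
    exfalso
    rw [hc', mul_one] at hc
    have hXN : X = p ^ s - 1 ∧ Y = 0 := by
      constructor
      · have : (X : ℤ) = ((p ^ s - 1 : ℕ) : ℤ) := by omega
        exact_mod_cast this
      · have : (Y : ℤ) = 0 := by omega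
        exact_mod_cast this
    have hwall : ∀ t < s, w t = p - 1 := by
      apply dig_uniq p hp2 s w (fun _ => p - 1)
        (fun t ht => by have := hwb t ht; omega)
        (fun t ht => by show p - 1 < p; omega)
      rw [geomsum p (by omega) s]
      exact hXN.1
    have hvall : ∀ t < s, v t = 0 := by
      intro t ht
      have h1 : ∀ x ∈ Finset.range s, v x * p ^ x = 0 :=
        Finset.sum_eq_zero_iff.mp hXN.2
      have h2 := h1 t (Finset.mem_range.mpr ht)
      have h3 : 0 < p ^ t := Nat.pow_pos (by omega)
      exact (Nat.mul_eq_zero.mp h2).resolve_right (by omega)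
    have huall : ∀ t < s, u t = p - 1 := by
      intro t ht
      rcases eq_or_lt_of_le (show t ≤ s - 1 by omega) with h' | h'
      · rw [h']
        rw [← hw0]; exact hwall 0 (by omega)
      · rw [← hwsucc t]; exact hwall (t + 1) (by omega)
    push_neg at hnot
    obtain ⟨i0, t0, ht01, ht0s, hk0⟩ := hnot
    have hk0' : k i0 t0 < p - 1 := lt_of_le_of_ne (hdig i0 t0 ht0s) hk0
    have hstrict : ∑ i, d i * k i t0 < ∑ i, d i * (p - 1) := by
      apply Finset.sum_lt_sum
      · intro i _; exact Nat.mul_le_mul_left _ (hdig i t0 ht0s)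
      · exact ⟨i0, Finset.mem_univ _, Nat.mul_lt_mul_of_pos_left hk0' (hdpos i0)⟩
    have hle : ∑ i, d i * (p - 1) ≤ p * (p - 1) := by
      calc ∑ i, d i * (p - 1) = (∑ i, d i) * (p - 1) := by rw [← Finset.sum_mul]
        _ ≤ p * (p - 1) := Nat.mul_le_mul_right _ hpd
    have heq0 := heq t0 ht0s
    rw [huall t0 ht0s, hvall t0 ht0s] at heq0
    have hcm : (p - 1) * p = p * (p - 1) := mul_comm _ _
    omega
  · -- Y = p^s - 1, X = 0 : contradiction
    exfalso
    rw [hc', mul_neg_one] at hc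
    have hXN : Y = p ^ s - 1 ∧ X = 0 := by
      constructor
      · have : (Y : ℤ) = ((p ^ s - 1 : ℕ) : ℤ) := by omega
        exact_mod_cast this
      · have : (X : ℤ) = 0 := by omega
        exact_mod_cast this
    have hwall : ∀ t < s, w t = 0 := by
      intro t ht
      have h1 : ∀ x ∈ Finset.range s, w x * p ^ x = 0 :=
        Finset.sum_eq_zero_iff.mp hXN.2
      have h2 := h1 t (Finset.mem_range.mpr ht)
      have h3 : 0 < p ^ t := Nat.pow_pos (by omega)
      exact (Nat.mul_eq_zero.mp h2).resolve_right (by omega)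
    have hvall : ∀ t < s, v t = p - 1 := by
      apply dig_uniq p hp2 s v (fun _ => p - 1)
        (fun t ht => by have := hv t ht; omega)
        (fun t ht => by show p - 1 < p; omega)
      rw [geomsum p (by omega) s]
      exact hXN.1
    have hu0 : u 0 = 0 := by
      rcases eq_or_lt_of_le hs with h' | h'
      · have hs0 : s - 1 = 0 := by omega
        rw [hs0] at hw0
        rw [← hw0]
        exact hwall 0 (by omega)
      · rw [← hwsucc 0]; exact hwall 1 (by omega)
    have heq0 := heq 0 (by omega)
    rw [hu0, hvall 0 (by omega)] at heq0
    omega
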